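/- Let A = σ(R)⟨x_1,…,x_n⟩ be a skew PBW extension of a ring R with the elements c_{i,j} of condition (iv) central in R. If R is Σ-rigid, then R is skew Π-Armendariz with respect to A. -/

import Mathlib

open scoped BigOperators

/-- Iterated "power composition": given a family of maps `f i` and multiplicities `k i`,
`iterPow f k = (f 0)^[k 0] ∘ (f 1)^[k 1] ∘ ⋯ ∘ (f (n-1))^[k (n-1)]`.
For a family of endomorphisms `σ` this is `σ^α = σ₁^{α₁} ∘ ⋯ ∘ σₙ^{αₙ}`. -/
def iterPow {α : Type*} {n : ℕ} (f : Fin n → α → α) (k : Fin n → ℕ) : α → α :=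
  (((List.finRange n).map fun i => (f i)^[k i]).foldr (· ∘ ·) id)

/-- A skew PBW extension `A = σ(R)⟨x₁,…,xₙ⟩` of a ring `R`. -/
structure SkewPBW (R A : Type*) [Ring R] [Ring A] (n : ℕ) where
  /-- the inclusion `R ⊆ A` (a ring embedding) -/
  ι : R →+* A
  ι_inj : Function.Injective ι
  /-- the variables `x₁,…,xₙ` -/
  x : Fin n → A
  /-- `A` is a free left `R`-module with basis the standard monomials
  `x^α = x₁^{α₁} ⋯ xₙ^{αₙ}`: every element of `A` is a unique finite
  `R`-linear combination of standard monomials. -/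
  free : Function.Bijective
    (fun c : (Fin n → ℕ) →₀ R =>
      c.sum fun α r => ι r * (((List.finRange n).map fun i => x i ^ α i).prod))
  /-- condition (iii): for each `i` and each nonzero `r ∈ R` there is a nonzero
  `c_{i,r} ∈ R` with `xᵢ r − c_{i,r} xᵢ ∈ R` -/
  lin : ∀ (i : Fin n) (r : R), r ≠ 0 → ∃ cr : R, cr ≠ 0 ∧
    ∃ r' : R, x i * ι r - ι cr * x i = ι r'
  /-- the constants `c_{i,j}` of condition (iv) -/
  c : Fin n → Fin n → R
  c_ne : ∀ i j, c i j ≠ 0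
  /-- condition (iv): `xⱼ xᵢ − c_{i,j} xᵢ xⱼ ∈ R + R x₁ + ⋯ + R xₙ` -/
  quad : ∀ i j, ∃ (r₀ : R) (r : Fin n → R),
    x j * x i - ι (c i j) * (x i * x j) = ι r₀ + ∑ k, ι (r k) * x k
  /-- the injective endomorphisms `σᵢ` -/
  σ : Fin n → R →+* R
  σ_inj : ∀ i, Function.Injective (σ i)
  /-- the `σᵢ`-derivations `δᵢ` -/
  δ : Fin n → R → R
  δ_add : ∀ (i : Fin n) (a b : R), δ i (a + b) = δ i a + δ i b
  δ_leibniz : ∀ (i : Fin n) (a b : R), δ i (a * b) = σ i a * δ i b + δ i a * b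
  /-- the fundamental relation `xᵢ r = σᵢ(r) xᵢ + δᵢ(r)` -/
  comm : ∀ (i : Fin n) (r : R), x i * ι r = ι (σ i r) * x i + ι (δ i r)

namespace SkewPBW

variable {R A : Type*} [Ring R] [Ring A] {n : ℕ}

/-- The standard monomial `x^α = x₁^{α₁} ⋯ xₙ^{αₙ}`. -/
def mono (S : SkewPBW R A n) (α : Fin n → ℕ) : A :=
  ((List.finRange n).map fun i => S.x i ^ α i).prod

/-- `σ^α = σ₁^{α₁} ∘ ⋯ ∘ σₙ^{αₙ}`. -/
def sigmaPow (S : SkewPBW R A n) (α : Fin n → ℕ) : R → R :=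
  iterPow (fun i => ⇑(S.σ i)) α

/-- `δ^α = δ₁^{α₁} ∘ ⋯ ∘ δₙ^{αₙ}`. -/
def deltaPow (S : SkewPBW R A n) (α : Fin n → ℕ) : R → R :=
  iterPow S.δ α

/-- `R` is `Σ`-compatible: `a σ^α(b) = 0 ↔ a b = 0`. -/
def SigmaCompatible (S : SkewPBW R A n) : Prop :=
  ∀ (a b : R) (α : Fin n → ℕ), a * S.sigmaPow α b = 0 ↔ a * b = 0

/-- `R` is `Δ`-compatible: `a b = 0 → a δ^β(b) = 0`. -/
def DeltaCompatible (S : SkewPBW R A n) : Prop :=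
  ∀ a b : R, a * b = 0 → ∀ β : Fin n → ℕ, a * S.deltaPow β b = 0

/-- `R` is `(Σ,Δ)`-compatible. -/
def SigmaDeltaCompatible (S : SkewPBW R A n) : Prop :=
  S.SigmaCompatible ∧ S.DeltaCompatible

/-- The elements `c_{i,j}` of condition (iv) are central in `R`. -/
def CCentral (S : SkewPBW R A n) : Prop :=
  ∀ (i j : Fin n) (r : R), S.c i j * r = r * S.c i j

/-- `R` is `(Σ,Δ)`-skew Armendariz with respect to `A`:
if `fg = 0` then `aᵢXᵢ · bⱼYⱼ = 0` for all coefficients/monomials of `f` and `g`. -/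
def SDSkewArmendariz (S : SkewPBW R A n) : Prop :=
  ∀ (t s : ℕ) (a : Fin (t + 1) → R) (X : Fin (t + 1) → Fin n → ℕ)
    (b : Fin (s + 1) → R) (Y : Fin (s + 1) → Fin n → ℕ),
    Function.Injective X → Function.Injective Y →
    (∑ i, S.ι (a i) * S.mono (X i)) * (∑ j, S.ι (b j) * S.mono (Y j)) = 0 →
    ∀ i j, (S.ι (a i) * S.mono (X i)) * (S.ι (b j) * S.mono (Y j)) = 0

/-- `R` is `Σ`-skew Armendariz with respect to `A`:
if `fg = 0` then `aᵢ σ^{αᵢ}(bⱼ) = 0` where `αᵢ = exp(Xᵢ)`. -/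
def SigmaSkewArmendariz (S : SkewPBW R A n) : Prop :=
  ∀ (m t : ℕ) (a : Fin (m + 1) → R) (X : Fin (m + 1) → Fin n → ℕ)
    (b : Fin (t + 1) → R) (Y : Fin (t + 1) → Fin n → ℕ),
    Function.Injective X → Function.Injective Y →
    (∑ i, S.ι (a i) * S.mono (X i)) * (∑ j, S.ι (b j) * S.mono (Y j)) = 0 →
    ∀ i j, a i * S.sigmaPow (X i) (b j) = 0

/-- `R` is skew `Π`-Armendariz with respect to `A`:
if `fg` is nilpotent in `A`, then `aᵢ bⱼ` is nilpotent in `R` for all `i, j`. -/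
def SkewPiArmendariz (S : SkewPBW R A n) : Prop :=
  ∀ (m t : ℕ) (a : Fin (m + 1) → R) (X : Fin (m + 1) → Fin n → ℕ)
    (b : Fin (t + 1) → R) (Y : Fin (t + 1) → Fin n → ℕ),
    Function.Injective X → Function.Injective Y →
    IsNilpotent ((∑ i, S.ι (a i) * S.mono (X i)) * (∑ j, S.ι (b j) * S.mono (Y j))) →
    ∀ i j, IsNilpotent (a i * b j)

end SkewPBW

/-- A ring is reversible if `a b = 0` implies `b a = 0`. -/
def IsReversible (R : Type*) [Ring R] : Prop :=
  ∀ a b : R, a * b = 0 → b * a = 0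

/-- `R` is `Σ`-rigid: `r σ^α(r) = 0` implies `r = 0`. -/
def SkewPBW.SigmaRigid {R A : Type*} [Ring R] [Ring A] {n : ℕ} (S : SkewPBW R A n) : Prop :=
  ∀ (r : R) (α : Fin n → ℕ), r * S.sigmaPow α r = 0 → r = 0


namespace SPBWaux

variable {n : ℕ}

def deg (α : Fin n → ℕ) : ℕ := ∑ i, α i

theorem deg_add (α β : Fin n → ℕ) : deg (α + β) = deg α + deg β := by
  simp [deg, Finset.sum_add_distrib]

theorem deg_single (i : Fin n) : deg (Pi.single i (1:ℕ)) = 1 := by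
  simp [deg, Finset.sum_pi_single']

/-- strict lex on exponent vectors -/
def plex (α β : Fin n → ℕ) : Prop := Pi.Lex (· < ·) (fun {_} => (· < ·)) α β

theorem plex_trans {a b c : Fin n → ℕ} (h1 : plex a b) (h2 : plex b c) : plex a c := by
  obtain ⟨N₁, lt_N₁, a_lt_b⟩ := h1
  obtain ⟨N₂, lt_N₂, b_lt_c⟩ := h2
  rcases lt_trichotomy N₁ N₂ with (H | rfl | H)
  exacts [⟨N₁, fun j hj => (lt_N₁ _ hj).trans (lt_N₂ _ <| hj.trans H), lt_N₂ _ H ▸ a_lt_b⟩,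
    ⟨N₁, fun j hj => (lt_N₁ _ hj).trans (lt_N₂ _ hj), a_lt_b.trans b_lt_c⟩,
    ⟨N₂, fun j hj => (lt_N₁ _ (hj.trans H)).trans (lt_N₂ _ hj), (lt_N₁ _ H).symm ▸ b_lt_c⟩]

theorem plex_irrefl (a : Fin n → ℕ) : ¬ plex a a := fun ⟨k, _, hk⟩ => lt_irrefl _ hk

theorem plex_trichot (a b : Fin n → ℕ) : plex a b ∨ a = b ∨ plex b a := by
  have h : ¬ plex a b → ¬ plex b a → a = b :=
    (Pi.isTrichotomous_lex _ _ (IsWellFounded.wf (r := ((· < ·) : Fin n → Fin n → Prop)))).trichotomous a b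
  by_cases h1 : plex a b
  · exact Or.inl h1
  by_cases h2 : plex b a
  · exact Or.inr (Or.inr h2)
  exact Or.inr (Or.inl (h h1 h2))

theorem plex_add_right {α β : Fin n → ℕ} (γ : Fin n → ℕ) (h : plex α β) : plex (α + γ) (β + γ) := by
  obtain ⟨i, hj, hi⟩ := h
  exact ⟨i, fun j hji => by simp only [Pi.add_apply, hj j hji], Nat.add_lt_add_right hi _⟩

/-- strict deglex -/
def rlt (α β : Fin n → ℕ) : Prop := deg α < deg β ∨ (deg α = deg β ∧ plex α β)

def rle (α β : Fin n → ℕ) : Prop := rlt α β ∨ α = β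

theorem rlt_trans {a b c : Fin n → ℕ} (h1 : rlt a b) (h2 : rlt b c) : rlt a c := by
  rcases h1 with h1 | ⟨e1, p1⟩ <;> rcases h2 with h2 | ⟨e2, p2⟩
  · exact Or.inl (h1.trans h2)
  · exact Or.inl (e2 ▸ h1)
  · exact Or.inl (e1 ▸ h2)
  · exact Or.inr ⟨e1.trans e2, plex_trans p1 p2⟩

theorem rlt_irrefl (a : Fin n → ℕ) : ¬ rlt a a := by
  rintro (h | ⟨_, p⟩)
  exacts [lt_irrefl _ h, plex_irrefl a p]

theorem rlt_ne {a b : Fin n → ℕ} (h : rlt a b) : a ≠ b := by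
  rintro rfl; exact rlt_irrefl a h

theorem rlt_trichot (a b : Fin n → ℕ) : rlt a b ∨ a = b ∨ rlt b a := by
  rcases lt_trichotomy (deg a) (deg b) with h | h | h
  · exact Or.inl (Or.inl h)
  · rcases plex_trichot a b with p | p | p
    · exact Or.inl (Or.inr ⟨h, p⟩)
    · exact Or.inr (Or.inl p)
    · exact Or.inr (Or.inr (Or.inr ⟨h.symm, p⟩))
  · exact Or.inr (Or.inr (Or.inl h))

theorem rlt_asymm {a b : Fin n → ℕ} (h : rlt a b) : ¬ rlt b a :=
  fun h' => rlt_irrefl a (rlt_trans h h')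

theorem rlt_add_right {α β : Fin n → ℕ} (γ : Fin n → ℕ) (h : rlt α β) : rlt (α + γ) (β + γ) := by
  rcases h with h | ⟨e, p⟩
  · exact Or.inl (by rw [deg_add, deg_add]; omega)
  · exact Or.inr ⟨by rw [deg_add, deg_add, e], plex_add_right γ p⟩

theorem rlt_add_left {α β : Fin n → ℕ} (γ : Fin n → ℕ) (h : rlt α β) : rlt (γ + α) (γ + β) := by
  rw [add_comm γ α, add_comm γ β]; exact rlt_add_right γ h

theorem rle_refl (a : Fin n → ℕ) : rle a a := Or.inr rfl

theorem rle_deg {a b : Fin n → ℕ} (h : rle a b) : deg a ≤ deg b := by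
  rcases h with (h | ⟨e, _⟩) | rfl
  exacts [le_of_lt h, le_of_eq e, le_rfl]

theorem rle_rlt_trans {a b c : Fin n → ℕ} (h1 : rle a b) (h2 : rlt b c) : rlt a c := by
  rcases h1 with h1 | rfl
  exacts [rlt_trans h1 h2, h2]

theorem rlt_rle_trans {a b c : Fin n → ℕ} (h1 : rlt a b) (h2 : rle b c) : rlt a c := by
  rcases h2 with h2 | rfl
  exacts [rlt_trans h1 h2, h1]

theorem rle_of_ne_imp {a b : Fin n → ℕ} (h : rle a b) (hne : a ≠ b) : rlt a b := by
  rcases h with h | rfl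
  exacts [h, absurd rfl hne]

theorem rle_add_right {α β : Fin n → ℕ} (γ : Fin n → ℕ) (h : rle α β) : rle (α + γ) (β + γ) := by
  rcases h with h | rfl
  exacts [Or.inl (rlt_add_right γ h), rle_refl _]


theorem rle_add_left {α β : Fin n → ℕ} (γ : Fin n → ℕ) (h : rle α β) : rle (γ + α) (γ + β) := by
  rcases h with h | rfl
  exacts [Or.inl (rlt_add_left γ h), rle_refl _]

/-- existence of an rle-minimum of `f` over a nonempty finset -/
theorem exists_rle_min {β : Type*} (f : β → (Fin n → ℕ)) (s : Finset β) (hs : s.Nonempty) :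
    ∃ m ∈ s, ∀ a ∈ s, rle (f m) (f a) := by
  induction hs using Finset.Nonempty.cons_induction with
  | singleton a => exact ⟨a, by simp, fun b hb => by simp at hb; subst hb; exact rle_refl _⟩
  | cons a s ha hs ih =>
    obtain ⟨m, hm, hmin⟩ := ih
    rcases rlt_trichot (f a) (f m) with h | h | h
    · refine ⟨a, Finset.mem_cons_self a s, fun b hb => ?_⟩
      rcases Finset.mem_cons.mp hb with rfl | hbs
      · exact rle_refl _
      · exact Or.inl (rlt_rle_trans h (hmin b hbs))
    · refine ⟨m, Finset.mem_cons_of_mem hm, fun b hb => ?_⟩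
      rcases Finset.mem_cons.mp hb with rfl | hbs
      · exact Or.inr h.symm
      · exact hmin b hbs
    · refine ⟨m, Finset.mem_cons_of_mem hm, fun b hb => ?_⟩
      rcases Finset.mem_cons.mp hb with rfl | hbs
      · exact Or.inl h
      · exact hmin b hbs

/-- existence of an rle-maximum of `f` over a nonempty finset -/
theorem exists_rle_max {β : Type*} (f : β → (Fin n → ℕ)) (s : Finset β) (hs : s.Nonempty) :
    ∃ m ∈ s, ∀ a ∈ s, rle (f a) (f m) := by
  induction hs using Finset.Nonempty.cons_induction with
  | singleton a => exact ⟨a, by simp, fun b hb => by simp at hb; subst hb; exact rle_refl _⟩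
  | cons a s ha hs ih =>
    obtain ⟨m, hm, hmax⟩ := ih
    rcases rlt_trichot (f m) (f a) with h | h | h
    · refine ⟨a, Finset.mem_cons_self a s, fun b hb => ?_⟩
      rcases Finset.mem_cons.mp hb with rfl | hbs
      · exact rle_refl _
      · exact Or.inl (rle_rlt_trans (hmax b hbs) h)
    · refine ⟨m, Finset.mem_cons_of_mem hm, fun b hb => ?_⟩
      rcases Finset.mem_cons.mp hb with rfl | hbs
      · exact Or.inr h.symm
      · exact hmax b hbs
    · refine ⟨m, Finset.mem_cons_of_mem hm, fun b hb => ?_⟩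
      rcases Finset.mem_cons.mp hb with rfl | hbs
      · exact Or.inl h
      · exact hmax b hbs

theorem mul_prod_pow {M : Type*} [Monoid M] (m : Fin n → M) :
    ∀ (l : List (Fin n)), l.Pairwise (· < ·) → ∀ i ∈ l, ∀ γ : Fin n → ℕ,
      (∀ j ∈ l, j < i → γ j = 0) →
      m i * (l.map fun s => m s ^ γ s).prod
        = (l.map fun s => m s ^ ((γ + Pi.single i 1 : Fin n → ℕ) s)).prod := by
  intro l
  induction l with
  | nil => intro _ i hi; exact absurd hi (by simp)
  | cons hd l ih =>
    intro hs i hi γ hγ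
    have hst : l.Pairwise (· < ·) := hs.of_cons
    have htl : ∀ s ∈ l, hd < s := fun s hsl => (List.pairwise_cons.mp hs).1 s hsl
    rcases List.mem_cons.mp hi with rfl | hil
    · have hrest : (l.map fun s => m s ^ ((γ + Pi.single i 1 : Fin n → ℕ) s)) = l.map fun s => m s ^ γ s := by
        apply List.map_congr_left
        intro s hsl
        have hne : s ≠ i := ne_of_gt (htl s hsl)
        have hv : ((γ + Pi.single i 1 : Fin n → ℕ) s) = γ s := by
          simp [Pi.single_eq_of_ne hne]
        rw [hv]
      simp only [List.map_cons, List.prod_cons, hrest]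
      rw [← mul_assoc, ← pow_succ']
      congr 2
      simp
    · have hti : hd < i := htl i hil
      have hγt : γ hd = 0 := hγ hd (by simp) hti
      have h1 : ((γ + Pi.single i 1 : Fin n → ℕ) hd) = 0 := by
        simp [hγt, Pi.single_eq_of_ne hti.ne]
      simp only [List.map_cons, List.prod_cons, hγt, h1, pow_zero, one_mul]
      exact ih hst i hil γ (fun j hj hji => hγ j (by simp [hj]) hji)

section Reduced
variable {T : Type*} [Ring T]

theorem eq_zero_of_pow_eq_zero (h2 : ∀ z : T, z * z = 0 → z = 0) :
    ∀ (k : ℕ) (z : T), z ^ k = 0 → z = 0 := by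
  intro k
  induction k using Nat.strong_induction_on with
  | _ k IH =>
    intro z hz
    match k with
    | 0 => rw [pow_zero] at hz
           calc z = z * 1 := (mul_one z).symm
             _ = z * 0 := by rw [hz]
             _ = 0 := mul_zero z
    | 1 => rwa [pow_one] at hz
    | (m+2) =>
      have key : z ^ (m+1) * z ^ (m+1) = 0 := by
        rw [← pow_add]
        have h : m + 1 + (m + 1) = (m + 2) + m := by omega
        rw [h, pow_add, hz, zero_mul]
      exact IH (m+1) (by omega) z (h2 _ key)

end Reduced

end SPBWaux
namespace SkewPBW

open SPBWaux

variable {R A : Type*} [Ring R] [Ring A] {n : ℕ}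

/-- the free-basis additive equivalence -/
noncomputable def EQ (S : SkewPBW R A n) : ((Fin n → ℕ) →₀ R) ≃+ A :=
  { Equiv.ofBijective _ S.free with
    map_add' := fun c d =>
      (Finsupp.sum_add_index' (f := c) (g := d)
        (h := fun α r => S.ι r * (((List.finRange n).map fun i => S.x i ^ α i).prod))
        (fun α => by simp) (fun α r s => by simp [add_mul]) : _) }

theorem EQ_apply (S : SkewPBW R A n) (c : (Fin n → ℕ) →₀ R) :
    S.EQ c = c.sum fun α r => S.ι r * S.mono α := rfl

/-- coefficient finsupp of an element of `A` -/
noncomputable def cf (S : SkewPBW R A n) (z : A) : (Fin n → ℕ) →₀ R := S.EQ.symm z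

theorem cf_EQ (S : SkewPBW R A n) (c : (Fin n → ℕ) →₀ R) : S.cf (S.EQ c) = c :=
  S.EQ.symm_apply_apply c

theorem EQ_cf (S : SkewPBW R A n) (z : A) : S.EQ (S.cf z) = z :=
  S.EQ.apply_symm_apply z

theorem cf_zero (S : SkewPBW R A n) : S.cf (0 : A) = 0 := map_zero S.EQ.symm

theorem cf_add (S : SkewPBW R A n) (y z : A) : S.cf (y + z) = S.cf y + S.cf z :=
  map_add S.EQ.symm y z

theorem cf_sub (S : SkewPBW R A n) (y z : A) : S.cf (y - z) = S.cf y - S.cf z :=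
  map_sub S.EQ.symm y z

theorem cf_iota_mul_mono (S : SkewPBW R A n) (r : R) (α : Fin n → ℕ) :
    S.cf (S.ι r * S.mono α) = Finsupp.single α r := by
  have : S.EQ (Finsupp.single α r) = S.ι r * S.mono α := by
    rw [EQ_apply, Finsupp.sum_single_index (by simp)]
  rw [← this, cf_EQ]

theorem cf_mono (S : SkewPBW R A n) (α : Fin n → ℕ) :
    S.cf (S.mono α) = Finsupp.single α 1 := by
  have := S.cf_iota_mul_mono 1 α
  rwa [map_one, one_mul] at this

theorem decomp (S : SkewPBW R A n) (z : A) :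
    z = (S.cf z).sum fun α r => S.ι r * S.mono α := by
  conv_lhs => rw [← S.EQ_cf z]
  exact S.EQ_apply _

theorem cf_iota_mul (S : SkewPBW R A n) (r : R) (z : A) (γ : Fin n → ℕ) :
    S.cf (S.ι r * z) γ = r * S.cf z γ := by
  have key : S.ι r * z = S.EQ ((S.cf z).mapRange (r * ·) (mul_zero r)) := by
    conv_lhs => rw [S.decomp z]
    rw [EQ_apply, Finsupp.mul_sum, Finsupp.sum_mapRange_index (by simp)]
    exact Finsupp.sum_congr fun α _ => by rw [← mul_assoc, ← map_mul]
  rw [key, cf_EQ, Finsupp.mapRange_apply]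

/-! ### monomial basics -/

theorem mono_zero (S : SkewPBW R A n) : S.mono 0 = 1 := by
  unfold SkewPBW.mono
  apply List.prod_eq_one
  intro y hy
  simp only [List.mem_map] at hy
  obtain ⟨i, _, rfl⟩ := hy
  simp

theorem x_mul_mono (S : SkewPBW R A n) {i : Fin n} {α : Fin n → ℕ}
    (h : ∀ j, j < i → α j = 0) :
    S.x i * S.mono α = S.mono (α + Pi.single i 1) :=
  mul_prod_pow S.x (List.finRange n) (List.pairwise_lt_finRange n) i (List.mem_finRange i) α
    (fun j _ hj => h j hj)

theorem mono_single (S : SkewPBW R A n) (i : Fin n) : S.mono (Pi.single i 1) = S.x i := by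
  have := S.x_mul_mono (i := i) (α := 0) (fun j _ => rfl)
  rw [mono_zero, mul_one, zero_add] at this
  exact this.symm

/-! ### sigmaPow basics -/

/-- tag a function as an element of the endomorphism monoid -/
def toEnd {T : Type*} (f : T → T) : Function.End T := f

/-- untag a product of endomorphisms -/
def endProd {T : Type*} (l : List (Function.End T)) : T → T := l.prod

theorem end_pow_iter {T : Type*} (f : T → T) (k : ℕ) :
    toEnd f ^ k = toEnd (f^[k]) := by
  induction k with
  | zero => rfl
  | succ k ih => rw [pow_succ, ih, Function.End.mul_def, Function.iterate_succ]; rfl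

theorem iterPow_eq_prod {T : Type*} (f : Fin n → T → T) (k : Fin n → ℕ) :
    iterPow f k = endProd ((List.finRange n).map fun i => toEnd (f i) ^ k i) := by
  unfold iterPow endProd
  induction (List.finRange n) with
  | nil => rfl
  | cons hd l ih =>
    simp only [List.map_cons, List.foldr_cons, List.prod_cons, ih]
    rw [end_pow_iter]
    rfl

theorem sigmaPow_eq_prod (S : SkewPBW R A n) (α : Fin n → ℕ) :
    S.sigmaPow α = endProd ((List.finRange n).map fun i => toEnd (⇑(S.σ i)) ^ α i) :=
  iterPow_eq_prod _ α

theorem sigmaPow_zero (S : SkewPBW R A n) : S.sigmaPow 0 = id := by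
  rw [sigmaPow_eq_prod]
  have h1 : ((List.finRange n).map fun i => toEnd (⇑(S.σ i)) ^ (0 : Fin n → ℕ) i).prod
      = (1 : Function.End R) := by
    apply List.prod_eq_one
    intro y hy
    simp only [List.mem_map] at hy
    obtain ⟨i, _, rfl⟩ := hy
    exact pow_zero _
  show endProd _ = id
  unfold endProd
  rw [h1]
  rfl

theorem sigmaPow_single_add (S : SkewPBW R A n) {i : Fin n} {α : Fin n → ℕ}
    (h : ∀ j, j < i → α j = 0) :
    S.sigmaPow (α + Pi.single i 1) = (⇑(S.σ i) : R → R) ∘ S.sigmaPow α := by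
  have key := mul_prod_pow (M := Function.End R) (fun j => toEnd (⇑(S.σ j)))
    (List.finRange n) (List.pairwise_lt_finRange n) i (List.mem_finRange i) α
    (fun j _ hj => h j hj)
  rw [sigmaPow_eq_prod, sigmaPow_eq_prod]
  unfold endProd
  rw [← key]
  rfl

/-! ### minimal-index decomposition -/

theorem exists_decomp {α : Fin n → ℕ} (h : α ≠ 0) :
    ∃ (i : Fin n) (β : Fin n → ℕ), (∀ j, j < i → β j = 0) ∧ (∀ j, j < i → α j = 0) ∧
      α = β + Pi.single i 1 ∧ deg α = deg β + 1 := by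
  have hne : (Finset.univ.filter fun j => α j ≠ 0).Nonempty := by
    rcases Function.ne_iff.mp h with ⟨j, hj⟩
    exact ⟨j, by simpa using hj⟩
  set s := Finset.univ.filter fun j => α j ≠ 0 with hs
  set i := s.min' hne with hidef
  have his : i ∈ s := s.min'_mem hne
  have hmin : ∀ j ∈ s, i ≤ j := fun j hj => s.min'_le j hj
  have hαi : α i ≠ 0 := by simpa [hs] using his
  have hlt : ∀ j, j < i → α j = 0 := by
    intro j hj
    by_contra hcon
    exact absurd (hmin j (by simp [hs, hcon])) (not_le.mpr hj)
  refine ⟨i, Function.update α i (α i - 1), ?_, hlt, ?_, ?_⟩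
  · intro j hj
    rw [Function.update_apply, if_neg (ne_of_lt hj)]
    exact hlt j hj
  · funext j
    by_cases hj : j = i
    · subst hj
      simp only [Pi.add_apply, Function.update_self, Pi.single_eq_same]
      omega
    · simp [Function.update_apply, hj, Pi.single_eq_of_ne hj]
  · have : α = Function.update α i (α i - 1) + Pi.single i 1 := by
      funext j
      by_cases hj : j = i
      · subst hj
        simp only [Pi.add_apply, Function.update_self, Pi.single_eq_same]
        omega
      · simp [Function.update_apply, hj, Pi.single_eq_of_ne hj]
    conv_lhs => rw [this]
    rw [deg_add, deg_single]

/-! ### the degree filtration -/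

/-- `Flt d z`: all monomials in the support of `z` have degree `< d`. -/
def Flt (S : SkewPBW R A n) (d : ℕ) (z : A) : Prop :=
  ∀ γ : Fin n → ℕ, d ≤ deg γ → S.cf z γ = 0

theorem Flt_zero (S : SkewPBW R A n) (d : ℕ) : S.Flt d 0 := by
  intro γ _
  rw [cf_zero]
  rfl

theorem Flt_add {S : SkewPBW R A n} {d : ℕ} {y z : A} (hy : S.Flt d y) (hz : S.Flt d z) :
    S.Flt d (y + z) := by
  intro γ hγ
  rw [cf_add]
  simp [hy γ hγ, hz γ hγ]

theorem Flt_of_le {S : SkewPBW R A n} {d d' : ℕ} {z : A} (h : S.Flt d z) (hd : d ≤ d') :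
    S.Flt d' z := fun γ hγ => h γ (le_trans hd hγ)

theorem Flt_single {S : SkewPBW R A n} {d : ℕ} {γ : Fin n → ℕ} (r : R) (h : deg γ < d) :
    S.Flt d (S.ι r * S.mono γ) := by
  intro γ' hγ'
  rw [cf_iota_mul_mono]
  rw [Finsupp.single_apply, if_neg]
  intro he
  subst he
  omega

theorem Flt_iota_mul {S : SkewPBW R A n} {d : ℕ} {z : A} (r : R) (h : S.Flt d z) :
    S.Flt d (S.ι r * z) := by
  intro γ hγ
  rw [cf_iota_mul, h γ hγ, mul_zero]

theorem Flt_sum {S : SkewPBW R A n} {d : ℕ} {β : Type*} (s : Finset β) (f : β → A)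
    (h : ∀ b ∈ s, S.Flt d (f b)) : S.Flt d (∑ b ∈ s, f b) := by
  classical
  induction s using Finset.induction_on with
  | empty => simpa using S.Flt_zero d
  | insert _ _ hne ih =>
    rw [Finset.sum_insert hne]
    exact Flt_add (h _ (Finset.mem_insert_self _ _))
      (ih fun b hb => h b (Finset.mem_insert_of_mem hb))

theorem Flt_finsupp_sum {S : SkewPBW R A n} {d : ℕ} {β M : Type*} [Zero M] (c : β →₀ M)
    (f : β → M → A) (h : ∀ b ∈ c.support, S.Flt d (f b (c b))) : S.Flt d (c.sum f) :=
  Flt_sum _ _ h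

end SkewPBW
namespace SkewPBW

open SPBWaux

variable {R A : Type*} [Ring R] [Ring A] {n : ℕ} {S : SkewPBW R A n}

theorem sigmaPow_single (S : SkewPBW R A n) (i : Fin n) :
    S.sigmaPow (Pi.single i 1) = ⇑(S.σ i) := by
  have h := S.sigmaPow_single_add (i := i) (α := 0) (fun j _ => rfl)
  rw [zero_add, sigmaPow_zero] at h
  rw [h]
  rfl

section Rigid

variable (hrigid : S.SigmaRigid)
include hrigid

theorem rigid_sq {r : R} (h : r * r = 0) : r = 0 := by
  refine hrigid r 0 ?_
  rw [S.sigmaPow_zero]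
  exact h

theorem rigid_rev {a b : R} (h : a * b = 0) : b * a = 0 := by
  apply rigid_sq hrigid
  calc b * a * (b * a) = b * (a * b) * a := by noncomm_ring
    _ = 0 := by rw [h, mul_zero, zero_mul]

theorem rigid_semi {a b : R} (h : a * b = 0) (c : R) : a * c * b = 0 := by
  apply rigid_sq hrigid
  have hba : b * a = 0 := rigid_rev hrigid h
  calc a * c * b * (a * c * b) = a * c * (b * a) * c * b := by noncomm_ring
    _ = 0 := by rw [hba, mul_zero, zero_mul, zero_mul]

theorem rigid_sigma_single {a b : R} (i : Fin n) (h : a * b = 0) : a * S.σ i b = 0 := by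
  have hba : b * a = 0 := rigid_rev hrigid h
  have h1 : S.σ i b * S.σ i a = 0 := by rw [← map_mul, hba, map_zero]
  refine hrigid (a * S.σ i b) (Pi.single i 1) ?_
  rw [S.sigmaPow_single]
  show a * S.σ i b * S.σ i (a * S.σ i b) = 0
  rw [map_mul]
  calc a * S.σ i b * (S.σ i a * S.σ i (S.σ i b))
      = a * (S.σ i b * S.σ i a) * S.σ i (S.σ i b) := by noncomm_ring
    _ = 0 := by rw [h1, mul_zero, zero_mul]

theorem rigid_sigma_single' {a b : R} (i : Fin n) (h : a * S.σ i b = 0) : a * b = 0 := by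
  have hba : b * a * S.sigmaPow (Pi.single i 1) (b * a) = 0 := by
    rw [S.sigmaPow_single]
    show b * a * S.σ i (b * a) = 0
    rw [map_mul]
    calc b * a * (S.σ i b * S.σ i a) = b * (a * S.σ i b) * S.σ i a := by noncomm_ring
      _ = 0 := by rw [h, mul_zero, zero_mul]
  have : b * a = 0 := hrigid _ _ hba
  exact rigid_rev hrigid this

theorem rigid_sigma_left {a b : R} (i : Fin n) (h : S.σ i a * b = 0) : a * b = 0 := by
  have hb : b * S.σ i a = 0 := rigid_rev hrigid h
  have key : a * b * S.sigmaPow (Pi.single i 1) (a * b) = 0 := by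
    rw [S.sigmaPow_single]
    show a * b * S.σ i (a * b) = 0
    rw [map_mul]
    calc a * b * (S.σ i a * S.σ i b) = a * (b * S.σ i a) * S.σ i b := by noncomm_ring
      _ = 0 := by rw [hb, mul_zero, zero_mul]
  exact hrigid _ _ key

theorem rigid_delta {a b : R} (i : Fin n) (h : a * b = 0) : a * S.δ i b = 0 := by
  have hδ0 : S.δ i 0 = 0 := by
    have h00 := S.δ_add i 0 0
    rw [add_zero] at h00
    exact (add_eq_left.mp h00.symm)
  have hba : b * a = 0 := rigid_rev hrigid h
  have hLeib : S.σ i a * S.δ i b + S.δ i a * b = 0 := by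
    rw [← S.δ_leibniz, h, hδ0]
  have h2 : S.σ i a * (S.δ i b * a) = 0 := by
    have hmul := congrArg (· * a) hLeib
    simp only [add_mul, zero_mul] at hmul
    rw [mul_assoc (S.δ i a) b a, hba, mul_zero, add_zero, mul_assoc] at hmul
    exact hmul
  have h3 : a * (S.δ i b * a) = 0 := rigid_sigma_left hrigid i h2
  apply rigid_sq hrigid
  calc a * S.δ i b * (a * S.δ i b) = a * (S.δ i b * a) * S.δ i b := by noncomm_ring
    _ = 0 := by rw [h3, zero_mul]

theorem rigid_sigma_iterate {a b : R} (i : Fin n) (k : ℕ) :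
    a * (⇑(S.σ i))^[k] b = 0 ↔ a * b = 0 := by
  induction k generalizing b with
  | zero => rfl
  | succ k ih =>
    rw [Function.iterate_succ_apply]
    rw [ih (b := S.σ i b)]
    constructor
    · exact rigid_sigma_single' hrigid i
    · exact rigid_sigma_single hrigid i

theorem rigid_foldr {a b : R} (k : Fin n → ℕ) (l : List (Fin n)) :
    a * (l.map fun i => (⇑(S.σ i))^[k i]).foldr (· ∘ ·) id b = 0 ↔ a * b = 0 := by
  induction l generalizing b with
  | nil => rfl
  | cons hd l ih =>
    simp only [List.map_cons, List.foldr_cons, Function.comp_apply]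
    rw [rigid_sigma_iterate hrigid]
    exact ih

theorem rigid_sigmaPow {a b : R} (α : Fin n → ℕ) :
    a * S.sigmaPow α b = 0 ↔ a * b = 0 :=
  rigid_foldr hrigid α (List.finRange n)

end Rigid

/-! ### quadratic junk is in `Flt 2`, and the `c i j` are units -/

theorem iota_eq_mul_mono (S : SkewPBW R A n) (r : R) : S.ι r = S.ι r * S.mono 0 := by
  rw [mono_zero, mul_one]

theorem Flt_quadJunk (S : SkewPBW R A n) (r₀ : R) (r : Fin n → R) :
    S.Flt 2 (S.ι r₀ + ∑ k, S.ι (r k) * S.x k) := by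
  apply Flt_add
  · rw [iota_eq_mul_mono]
    exact Flt_single r₀ (by rw [show deg (0 : Fin n → ℕ) = 0 by simp [deg]]; omega)
  · apply Flt_sum
    intro k _
    rw [← S.mono_single k]
    exact Flt_single (r k) (by rw [deg_single]; omega)

theorem deg_pair {i j : Fin n} : deg (Pi.single i 1 + Pi.single j 1 : Fin n → ℕ) = 2 := by
  rw [deg_add, deg_single, deg_single]

theorem x_mul_x (S : SkewPBW R A n) {i j : Fin n} (hij : i < j) :
    S.x i * S.x j = S.mono (Pi.single j 1 + Pi.single i 1) := by
  rw [← S.mono_single j]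
  exact S.x_mul_mono (fun t ht => Pi.single_eq_of_ne (ne_of_lt (lt_trans ht hij)) 1)

theorem c_unit (S : SkewPBW R A n) (hc : S.CCentral) {i j : Fin n} (hij : i < j) :
    IsUnit (S.c i j) := by
  obtain ⟨r₀, r, hq1⟩ := S.quad i j
  obtain ⟨s₀, s, hq2⟩ := S.quad j i
  set ε := (Pi.single j 1 + Pi.single i 1 : Fin n → ℕ) with hε
  have hdeg : deg ε = 2 := by rw [hε, deg_add, deg_single, deg_single]
  have hxij : S.x i * S.x j = S.mono ε := S.x_mul_x hij
  have hq1' : S.x j * S.x i = S.ι (S.c i j) * S.mono ε + (S.ι r₀ + ∑ k, S.ι (r k) * S.x k) := by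
    rw [← hxij]
    have h := sub_eq_iff_eq_add.mp hq1
    rw [h]
    exact add_comm _ _
  have hq2' : S.mono ε = S.ι (S.c j i) * (S.x j * S.x i) + (S.ι s₀ + ∑ k, S.ι (s k) * S.x k) := by
    rw [← hxij]
    have h := sub_eq_iff_eq_add.mp hq2
    rw [h]
    exact add_comm _ _
  have key : (1 : R) = S.c j i * S.c i j := by
    have e1 : S.cf (S.mono ε) ε = 1 := by
      rw [S.cf_mono, Finsupp.single_apply, if_pos rfl]
    have e2 : S.cf (S.ι (S.c j i) * (S.x j * S.x i) + (S.ι s₀ + ∑ k, S.ι (s k) * S.x k)) ε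
        = S.c j i * S.c i j := by
      rw [cf_add, Finsupp.add_apply]
      rw [S.Flt_quadJunk s₀ s ε (by omega), add_zero]
      rw [hq1']
      rw [mul_add, ← mul_assoc, ← map_mul, cf_add, Finsupp.add_apply]
      have hj : S.cf (S.ι (S.c j i) * (S.ι r₀ + ∑ k, S.ι (r k) * S.x k)) ε = 0 := by
        exact Flt_iota_mul _ (S.Flt_quadJunk r₀ r) ε (by omega)
      rw [hj, add_zero, cf_iota_mul_mono, Finsupp.single_apply, if_pos rfl]
    rw [← e1, ← e2]
    exact congrArg (fun z => S.cf z ε) hq2'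
  have key' : S.c i j * S.c j i = 1 := by rw [hc i j (S.c j i)]; exact key.symm
  exact ⟨⟨S.c i j, S.c j i, key', key.symm⟩, rfl⟩

end SkewPBW
namespace SkewPBW

open SPBWaux

variable {R A : Type*} [Ring R] [Ring A] {n : ℕ}

/-- auxiliary: multiplication by `x i` raises the filtration by one, assuming the
expansion property below degree `D`. -/
theorem x_Flt_aux (S : SkewPBW R A n) {D : ℕ}
    (hC2 : ∀ (i : Fin n) (α : Fin n → ℕ), deg α < D → ∃ u : R, IsUnit u ∧
      S.Flt (deg α + 1) (S.x i * S.mono α - S.ι u * S.mono (α + Pi.single i 1)))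
    {d : ℕ} (hdD : d ≤ D) {z : A} (hz : S.Flt d z) (i : Fin n) :
    S.Flt (d + 1) (S.x i * z) := by
  rw [S.decomp z, Finsupp.sum, Finset.mul_sum]
  apply Flt_sum
  intro γ hγ
  have hdegγ : deg γ < d := by
    by_contra hcon
    exact (Finsupp.mem_support_iff.mp hγ) (hz γ (not_lt.mp hcon))
  obtain ⟨u, hu, hE⟩ := hC2 i γ (lt_of_lt_of_le hdegγ hdD)
  have hterm : S.x i * (S.ι (S.cf z γ) * S.mono γ)
      = S.ι (S.σ i (S.cf z γ) * u) * S.mono (γ + Pi.single i 1)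
        + S.ι (S.σ i (S.cf z γ)) * (S.x i * S.mono γ - S.ι u * S.mono (γ + Pi.single i 1))
        + S.ι (S.δ i (S.cf z γ)) * S.mono γ := by
    rw [← mul_assoc, S.comm i, map_mul]
    noncomm_ring
  rw [hterm]
  apply Flt_add
  apply Flt_add
  · exact Flt_single _ (by rw [deg_add, deg_single]; omega)
  · exact Flt_iota_mul _ (Flt_of_le hE (by omega))
  · exact Flt_single _ (by omega)

/-- key expansion: `x i * mono α = u • mono (α + eᵢ) + lower degree` with `u` a unit. -/
theorem x_mono_expand (S : SkewPBW R A n) (hc : S.CCentral) :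
    ∀ (D : ℕ) (i : Fin n) (α : Fin n → ℕ), deg α ≤ D →
    ∃ u : R, IsUnit u ∧
      S.Flt (deg α + 1) (S.x i * S.mono α - S.ι u * S.mono (α + Pi.single i 1)) := by
  intro D
  induction D using Nat.strong_induction_on with
  | _ D IH =>
    have hC2' : ∀ (i : Fin n) (α : Fin n → ℕ), deg α < D → ∃ u : R, IsUnit u ∧
        S.Flt (deg α + 1) (S.x i * S.mono α - S.ι u * S.mono (α + Pi.single i 1)) :=
      fun i α h => IH (deg α) h i α le_rfl
    intro i α hα
    by_cases h0 : ∀ j, j < i → α j = 0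
    · exact ⟨1, isUnit_one,
        by rw [S.x_mul_mono h0, map_one, one_mul, sub_self]; exact S.Flt_zero _⟩
    push_neg at h0
    obtain ⟨j₀, hj₀i, hj₀⟩ := h0
    have hαne : α ≠ 0 := fun hcon => hj₀ (by rw [hcon]; rfl)
    obtain ⟨i₀, α', hβlt, hαlt, hαeq, hdeg⟩ := exists_decomp hαne
    have hi₀i : i₀ < i := by
      by_contra hcon
      exact hj₀ (hαlt j₀ (lt_of_lt_of_le hj₀i (not_lt.mp hcon)))
    have hmono : S.x i₀ * S.mono α' = S.mono α := by
      rw [S.x_mul_mono hβlt, ← hαeq]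
    obtain ⟨r₀, r, hq⟩ := S.quad i₀ i
    have hq' : S.x i * S.x i₀
        = S.ι (S.c i₀ i) * (S.x i₀ * S.x i) + (S.ι r₀ + ∑ k, S.ι (r k) * S.x k) := by
      rw [sub_eq_iff_eq_add.mp hq]; exact add_comm _ _
    have hdα' : deg α' < D := by omega
    obtain ⟨u', hu', hE'⟩ := hC2' i α' hdα'
    set E' := S.x i * S.mono α' - S.ι u' * S.mono (α' + Pi.single i 1) with hE'def
    set c' := S.c i₀ i with hc'def
    have hcond : ∀ j, j < i₀ → (α' + Pi.single i 1 : Fin n → ℕ) j = 0 := by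
      intro j hj
      have h1 := hβlt j hj
      have h2 : (Pi.single i 1 : Fin n → ℕ) j = 0 :=
        Pi.single_eq_of_ne (ne_of_lt (lt_trans hj hi₀i)) 1
      have hpt : (α' + Pi.single i 1 : Fin n → ℕ) j = α' j + (Pi.single i 1 : Fin n → ℕ) j := rfl
      rw [hpt, h1, h2]
    have hx0 : S.x i₀ * S.mono (α' + Pi.single i 1) = S.mono (α + Pi.single i 1) := by
      rw [S.x_mul_mono hcond]
      congr 1
      rw [hαeq]
      exact add_right_comm α' (Pi.single i 1) (Pi.single i₀ 1)
    have hsplit : S.x i * S.mono α' = S.ι u' * S.mono (α' + Pi.single i 1) + E' := by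
      rw [hE'def]; abel
    have step1 : S.x i * S.mono α
        = S.ι c' * (S.x i₀ * (S.x i * S.mono α'))
          + (S.ι r₀ * S.mono α' + ∑ k, S.ι (r k) * (S.x k * S.mono α')) := by
      calc S.x i * S.mono α = (S.x i * S.x i₀) * S.mono α' := by rw [← hmono, mul_assoc]
        _ = (S.ι c' * (S.x i₀ * S.x i)) * S.mono α'
              + (S.ι r₀ + ∑ k, S.ι (r k) * S.x k) * S.mono α' := by rw [hq', add_mul]
        _ = S.ι c' * (S.x i₀ * (S.x i * S.mono α'))
              + (S.ι r₀ * S.mono α' + ∑ k, S.ι (r k) * (S.x k * S.mono α')) := by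
            rw [add_mul, Finset.sum_mul]
            simp only [mul_assoc]
    have step2 : S.x i₀ * (S.x i * S.mono α')
        = S.ι (S.σ i₀ u') * S.mono (α + Pi.single i 1)
          + (S.ι (S.δ i₀ u') * S.mono (α' + Pi.single i 1) + S.x i₀ * E') := by
      calc S.x i₀ * (S.x i * S.mono α')
          = S.x i₀ * (S.ι u' * S.mono (α' + Pi.single i 1)) + S.x i₀ * E' := by
            rw [hsplit, mul_add]
        _ = (S.ι (S.σ i₀ u') * S.x i₀ + S.ι (S.δ i₀ u')) * S.mono (α' + Pi.single i 1)
              + S.x i₀ * E' := by rw [← mul_assoc, S.comm i₀ u']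
        _ = S.ι (S.σ i₀ u') * S.mono (α + Pi.single i 1)
              + (S.ι (S.δ i₀ u') * S.mono (α' + Pi.single i 1) + S.x i₀ * E') := by
            rw [add_mul, mul_assoc, hx0]; abel
    refine ⟨c' * S.σ i₀ u', (S.c_unit hc hi₀i).mul (hu'.map (S.σ i₀)), ?_⟩
    have hid : S.x i * S.mono α - S.ι (c' * S.σ i₀ u') * S.mono (α + Pi.single i 1)
        = S.ι c' * (S.ι (S.δ i₀ u') * S.mono (α' + Pi.single i 1))
          + S.ι c' * (S.x i₀ * E')
          + S.ι r₀ * S.mono α'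
          + ∑ k, S.ι (r k) * (S.x k * S.mono α') := by
      rw [step1, step2, map_mul]
      noncomm_ring
    rw [hid]
    apply Flt_add
    apply Flt_add
    apply Flt_add
    · exact Flt_iota_mul _ (Flt_single _ (by rw [deg_add, deg_single]; omega))
    · refine Flt_iota_mul _ ?_
      have hE2 : S.Flt (deg α) E' := Flt_of_le hE' (by omega)
      exact S.x_Flt_aux hC2' hα hE2 i₀
    · exact Flt_single _ (by omega)
    · apply Flt_sum
      intro k _
      obtain ⟨u'', hu'', hE3⟩ := hC2' k α' hdα'
      have hterm : S.ι (r k) * (S.x k * S.mono α')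
          = S.ι (r k * u'') * S.mono (α' + Pi.single k 1)
            + S.ι (r k) * (S.x k * S.mono α' - S.ι u'' * S.mono (α' + Pi.single k 1)) := by
        rw [map_mul]
        noncomm_ring
      rw [hterm]
      exact Flt_add (Flt_single _ (by rw [deg_add, deg_single]; omega))
        (Flt_iota_mul _ (Flt_of_le hE3 (by omega)))

/-- final form of the expansion lemma -/
theorem x_mono (S : SkewPBW R A n) (hc : S.CCentral) (i : Fin n) (α : Fin n → ℕ) :
    ∃ u : R, IsUnit u ∧
      S.Flt (deg α + 1) (S.x i * S.mono α - S.ι u * S.mono (α + Pi.single i 1)) :=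
  S.x_mono_expand hc (deg α) i α le_rfl

/-- multiplication by `x i` raises the filtration by (at most) one -/
theorem x_Flt (S : SkewPBW R A n) (hc : S.CCentral) {d : ℕ} {z : A}
    (hz : S.Flt d z) (i : Fin n) : S.Flt (d + 1) (S.x i * z) :=
  S.x_Flt_aux (D := d) (fun i α h => S.x_mono_expand hc d i α (le_of_lt h)) le_rfl hz i

end SkewPBW
namespace SkewPBW

open SPBWaux

variable {R A : Type*} [Ring R] [Ring A] {n : ℕ}

/-- passing a scalar through a monomial -/
theorem mono_iota_expand (S : SkewPBW R A n) (hc : S.CCentral) :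
    ∀ (D : ℕ) (α : Fin n → ℕ) (r : R), deg α ≤ D →
      S.Flt (deg α) (S.mono α * S.ι r - S.ι (S.sigmaPow α r) * S.mono α) := by
  intro D
  induction D using Nat.strong_induction_on with
  | _ D IH =>
    intro α r hα
    by_cases hα0 : α = 0
    · subst hα0
      rw [S.mono_zero, S.sigmaPow_zero, one_mul, mul_one]
      show S.Flt _ (S.ι r - S.ι (id r))
      rw [id_eq, sub_self]
      exact S.Flt_zero _
    obtain ⟨i₀, α', hβlt, hαlt, hαeq, hdeg⟩ := exists_decomp hα0
    have hmono : S.x i₀ * S.mono α' = S.mono α := by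
      rw [S.x_mul_mono hβlt, ← hαeq]
    set s := S.sigmaPow α' r with hsdef
    have hE4 : S.Flt (deg α') (S.mono α' * S.ι r - S.ι s * S.mono α') :=
      IH (deg α') (by omega) α' r le_rfl
    set E4 := S.mono α' * S.ι r - S.ι s * S.mono α' with hE4def
    have hsplit : S.mono α' * S.ι r = S.ι s * S.mono α' + E4 := by rw [hE4def]; abel
    have hσ : S.sigmaPow α r = S.σ i₀ s := by
      have h := S.sigmaPow_single_add (i := i₀) (α := α') hβlt
      rw [hαeq, h]
      rfl
    have key : S.mono α * S.ι r - S.ι (S.sigmaPow α r) * S.mono α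
        = S.ι (S.δ i₀ s) * S.mono α' + S.x i₀ * E4 := by
      have c1 : S.mono α * S.ι r = S.x i₀ * (S.ι s * S.mono α') + S.x i₀ * E4 := by
        rw [← hmono, mul_assoc, hsplit, mul_add]
      have c2 : S.x i₀ * (S.ι s * S.mono α')
          = S.ι (S.σ i₀ s) * S.mono α + S.ι (S.δ i₀ s) * S.mono α' := by
        rw [← mul_assoc, S.comm i₀ s, add_mul, mul_assoc, hmono]
      rw [c1, c2, hσ]
      abel
    rw [key]
    apply Flt_add
    · exact Flt_single _ (by omega)
    · have h := S.x_Flt hc hE4 i₀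
      exact Flt_of_le h (by omega)

theorem mono_iota (S : SkewPBW R A n) (hc : S.CCentral) (α : Fin n → ℕ) (r : R) :
    S.Flt (deg α) (S.mono α * S.ι r - S.ι (S.sigmaPow α r) * S.mono α) :=
  S.mono_iota_expand hc (deg α) α r le_rfl

theorem Flt_mul_iota (S : SkewPBW R A n) (hc : S.CCentral) {d : ℕ} {z : A}
    (hz : S.Flt d z) (r : R) : S.Flt d (z * S.ι r) := by
  rw [S.decomp z, Finsupp.sum, Finset.sum_mul]
  apply Flt_sum
  intro γ hγ
  have hdegγ : deg γ < d := by
    by_contra hcon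
    exact (Finsupp.mem_support_iff.mp hγ) (hz γ (not_lt.mp hcon))
  have key : S.ι (S.cf z γ) * S.mono γ * S.ι r
      = S.ι (S.cf z γ * S.sigmaPow γ r) * S.mono γ
        + S.ι (S.cf z γ) * (S.mono γ * S.ι r - S.ι (S.sigmaPow γ r) * S.mono γ) := by
    rw [map_mul]
    noncomm_ring
  rw [key]
  exact Flt_add (Flt_single _ hdegγ)
    (Flt_iota_mul _ (Flt_of_le (S.mono_iota hc γ r) (by omega)))

/-- product of two monomials -/
theorem mono_mono_expand (S : SkewPBW R A n) (hc : S.CCentral) :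
    ∀ (D : ℕ) (α β : Fin n → ℕ), deg α ≤ D →
      ∃ u : R, IsUnit u ∧
        S.Flt (deg α + deg β) (S.mono α * S.mono β - S.ι u * S.mono (α + β)) := by
  intro D
  induction D using Nat.strong_induction_on with
  | _ D IH =>
    intro α β hα
    by_cases hα0 : α = 0
    · subst hα0
      refine ⟨1, isUnit_one, ?_⟩
      rw [S.mono_zero, map_one, one_mul, one_mul, zero_add, sub_self]
      exact S.Flt_zero _
    obtain ⟨i₀, α', hβlt, hαlt, hαeq, hdeg⟩ := exists_decomp hα0
    have hmono : S.x i₀ * S.mono α' = S.mono α := by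
      rw [S.x_mul_mono hβlt, ← hαeq]
    obtain ⟨u', hu', hE5⟩ := IH (deg α') (by omega) α' β le_rfl
    set E5 := S.mono α' * S.mono β - S.ι u' * S.mono (α' + β) with hE5def
    obtain ⟨v, hv, hE6⟩ := S.x_mono hc i₀ (α' + β)
    set E6 := S.x i₀ * S.mono (α' + β) - S.ι v * S.mono (α' + β + Pi.single i₀ 1) with hE6def
    have hsum : α' + β + Pi.single i₀ 1 = α + β := by
      rw [hαeq]
      exact add_right_comm α' β (Pi.single i₀ 1)
    refine ⟨S.σ i₀ u' * v, (hu'.map (S.σ i₀)).mul hv, ?_⟩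
    have key : S.mono α * S.mono β - S.ι (S.σ i₀ u' * v) * S.mono (α + β)
        = S.ι (S.σ i₀ u') * E6 + S.ι (S.δ i₀ u') * S.mono (α' + β) + S.x i₀ * E5 := by
      have c1 : S.mono α * S.mono β
          = S.x i₀ * (S.ι u' * S.mono (α' + β)) + S.x i₀ * E5 := by
        rw [← hmono, mul_assoc]
        conv_lhs => rw [show S.mono α' * S.mono β = S.ι u' * S.mono (α' + β) + E5 by
          rw [hE5def]; abel]
        rw [mul_add]
      have c2 : S.x i₀ * (S.ι u' * S.mono (α' + β))
          = S.ι (S.σ i₀ u') * (S.x i₀ * S.mono (α' + β)) + S.ι (S.δ i₀ u') * S.mono (α' + β) := by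
        rw [← mul_assoc, S.comm i₀ u', add_mul, mul_assoc]
      have c3 : S.x i₀ * S.mono (α' + β) = S.ι v * S.mono (α + β) + E6 := by
        rw [hE6def, hsum]; abel
      rw [c1, c2, c3, map_mul]
      noncomm_ring
    rw [key]
    apply Flt_add
    apply Flt_add
    · refine Flt_iota_mul _ (Flt_of_le hE6 ?_)
      rw [deg_add]
      omega
    · exact Flt_single _ (by rw [deg_add]; omega)
    · have h := S.x_Flt hc (Flt_of_le hE5 (le_refl (deg α' + deg β))) i₀
      exact Flt_of_le h (by omega)

theorem mono_mono (S : SkewPBW R A n) (hc : S.CCentral) (α β : Fin n → ℕ) :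
    ∃ u : R, IsUnit u ∧
      S.Flt (deg α + deg β) (S.mono α * S.mono β - S.ι u * S.mono (α + β)) :=
  S.mono_mono_expand hc (deg α) α β le_rfl

theorem Flt_mul_mono (S : SkewPBW R A n) (hc : S.CCentral) {d : ℕ} {z : A}
    (hz : S.Flt d z) (β : Fin n → ℕ) : S.Flt (d + deg β) (z * S.mono β) := by
  rw [S.decomp z, Finsupp.sum, Finset.sum_mul]
  apply Flt_sum
  intro γ hγ
  have hdegγ : deg γ < d := by
    by_contra hcon
    exact (Finsupp.mem_support_iff.mp hγ) (hz γ (not_lt.mp hcon))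
  obtain ⟨u, hu, hE⟩ := S.mono_mono hc γ β
  have key : S.ι (S.cf z γ) * S.mono γ * S.mono β
      = S.ι (S.cf z γ * u) * S.mono (γ + β)
        + S.ι (S.cf z γ) * (S.mono γ * S.mono β - S.ι u * S.mono (γ + β)) := by
    rw [map_mul]
    noncomm_ring
  rw [key]
  refine Flt_add (Flt_single _ ?_) (Flt_iota_mul _ (Flt_of_le hE ?_))
  · rw [deg_add]; omega
  · omega

/-- the full product expansion with leading coefficient -/
theorem prod_expand (S : SkewPBW R A n) (hc : S.CCentral) (α β : Fin n → ℕ) (a b : R) :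
    ∃ u : R, IsUnit u ∧
      S.Flt (deg α + deg β)
        ((S.ι a * S.mono α) * (S.ι b * S.mono β)
          - S.ι (a * S.sigmaPow α b * u) * S.mono (α + β)) := by
  obtain ⟨u, hu, hE6⟩ := S.mono_mono hc α β
  set E6 := S.mono α * S.mono β - S.ι u * S.mono (α + β) with hE6def
  set E4 := S.mono α * S.ι b - S.ι (S.sigmaPow α b) * S.mono α with hE4def
  have hE4 : S.Flt (deg α) E4 := S.mono_iota hc α b
  refine ⟨u, hu, ?_⟩
  have key : (S.ι a * S.mono α) * (S.ι b * S.mono β)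
      - S.ι (a * S.sigmaPow α b * u) * S.mono (α + β)
      = S.ι a * (E4 * S.mono β) + S.ι (a * S.sigmaPow α b) * E6 := by
    have c1 : (S.ι a * S.mono α) * (S.ι b * S.mono β)
        = S.ι a * ((S.mono α * S.ι b) * S.mono β) := by noncomm_ring
    have c2 : S.mono α * S.ι b = S.ι (S.sigmaPow α b) * S.mono α + E4 := by
      rw [hE4def]; abel
    have c3 : S.mono α * S.mono β = S.ι u * S.mono (α + β) + E6 := by
      rw [hE6def]; abel
    rw [c1, c2, add_mul, mul_assoc, c3, map_mul, map_mul]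
    noncomm_ring
  rw [key]
  exact Flt_add (Flt_iota_mul _ (S.Flt_mul_mono hc hE4 β)) (Flt_iota_mul _ hE6)

/-- expansion of `mono α * ι r` as a sum of "twisted-coefficient" terms,
where each twisting map preserves zero products (given rigidity). -/
theorem LFG (S : SkewPBW R A n) (hrigid : S.SigmaRigid) (hc : S.CCentral) :
    ∀ (D : ℕ) (α : Fin n → ℕ), deg α ≤ D →
      ∃ l : List ((R → R) × A),
        (∀ p ∈ l, ∀ a b : R, a * b = 0 → a * p.1 b = 0) ∧
        ∀ r : R, S.mono α * S.ι r = (l.map fun p => S.ι (p.1 r) * p.2).sum := by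
  intro D
  induction D using Nat.strong_induction_on with
  | _ D IH =>
    intro α hα
    by_cases hα0 : α = 0
    · subst hα0
      refine ⟨[(id, 1)], ?_, ?_⟩
      · intro p hp a b h
        simp only [List.mem_singleton] at hp
        subst hp
        exact h
      · intro r
        simp [S.mono_zero]
    obtain ⟨i₀, α', hβlt, hαlt, hαeq, hdeg⟩ := exists_decomp hα0
    have hmono : S.x i₀ * S.mono α' = S.mono α := by
      rw [S.x_mul_mono hβlt, ← hαeq]
    obtain ⟨l, hkill, hsum⟩ := IH (deg α') (by omega) α' le_rfl
    refine ⟨(l.map fun p => (⇑(S.σ i₀) ∘ p.1, S.x i₀ * p.2))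
        ++ (l.map fun p => (S.δ i₀ ∘ p.1, p.2)), ?_, ?_⟩
    · intro p hp a b h
      rcases List.mem_append.mp hp with hp | hp <;>
        · simp only [List.mem_map] at hp
          obtain ⟨q, hq, rfl⟩ := hp
          first
          | exact rigid_sigma_single hrigid i₀ (hkill q hq a b h)
          | exact rigid_delta hrigid i₀ (hkill q hq a b h)
    · intro r
      rw [← hmono, mul_assoc, hsum r]
      rw [List.map_append, List.sum_append, List.map_map, List.map_map]
      have hterm : ∀ p : (R → R) × A,
          S.x i₀ * (S.ι (p.1 r) * p.2)
            = S.ι (S.σ i₀ (p.1 r)) * (S.x i₀ * p.2) + S.ι (S.δ i₀ (p.1 r)) * p.2 := by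
        intro p
        rw [← mul_assoc, S.comm i₀, add_mul, mul_assoc]
      calc S.x i₀ * (l.map fun p => S.ι (p.1 r) * p.2).sum
          = (l.map fun p => S.x i₀ * (S.ι (p.1 r) * p.2)).sum := by
            rw [List.sum_map_mul_left]
        _ = (l.map fun p => S.ι (S.σ i₀ (p.1 r)) * (S.x i₀ * p.2)
              + S.ι (S.δ i₀ (p.1 r)) * p.2).sum := by
            congr 1
            exact List.map_congr_left fun p _ => hterm p
        _ = _ := by
            rw [List.sum_map_add]
            rfl

/-- the kill lemma: orthogonal coefficients annihilate whole terms -/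
theorem term_kill (S : SkewPBW R A n) (hrigid : S.SigmaRigid) (hc : S.CCentral)
    {a b : R} (h : a * b = 0) (α β : Fin n → ℕ) :
    (S.ι a * S.mono α) * (S.ι b * S.mono β) = 0 := by
  obtain ⟨l, hkill, hsum⟩ := S.LFG hrigid hc (deg α) α le_rfl
  have c1 : (S.ι a * S.mono α) * (S.ι b * S.mono β)
      = S.ι a * ((S.mono α * S.ι b) * S.mono β) := by noncomm_ring
  rw [c1, hsum b, ← List.sum_map_mul_right, ← List.sum_map_mul_left]
  apply List.sum_eq_zero
  intro y hy
  simp only [List.mem_map] at hy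
  obtain ⟨p, hp, rfl⟩ := hy
  have hz : a * p.1 b = 0 := hkill p hp a b h
  have hre : S.ι a * (S.ι (p.1 b) * p.2 * S.mono β) = S.ι (a * p.1 b) * (p.2 * S.mono β) := by
    rw [map_mul]
    noncomm_ring
  rw [hre, hz, map_zero, zero_mul]

end SkewPBW
namespace SkewPBW

open SPBWaux

variable {R A : Type*} [Ring R] [Ring A] {n : ℕ}

theorem cf_sum (S : SkewPBW R A n) {β : Type*} (s : Finset β) (f : β → A) :
    S.cf (∑ e ∈ s, f e) = ∑ e ∈ s, S.cf (f e) :=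
  map_sum S.EQ.symm f s

/-- coefficient of a product of two terms: the leading coefficient and vanishing above -/
theorem cf_term (S : SkewPBW R A n) (hc : S.CCentral) (α β : Fin n → ℕ) (a b : R) :
    ∃ u : R, IsUnit u ∧
      S.cf ((S.ι a * S.mono α) * (S.ι b * S.mono β)) (α + β) = a * S.sigmaPow α b * u ∧
      ∀ γ, γ ≠ α + β → deg (α + β) ≤ deg γ →
        S.cf ((S.ι a * S.mono α) * (S.ι b * S.mono β)) γ = 0 := by
  obtain ⟨u, hu, hE⟩ := S.prod_expand hc α β a b
  set P := (S.ι a * S.mono α) * (S.ι b * S.mono β) with hPdef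
  have hdecomp : P = S.ι (a * S.sigmaPow α b * u) * S.mono (α + β)
      + (P - S.ι (a * S.sigmaPow α b * u) * S.mono (α + β)) := by abel
  have hcfP : ∀ γ, S.cf P γ
      = Finsupp.single (α + β) (a * S.sigmaPow α b * u) γ
        + S.cf (P - S.ι (a * S.sigmaPow α b * u) * S.mono (α + β)) γ := by
    intro γ
    conv_lhs => rw [hdecomp]
    rw [cf_add, Finsupp.add_apply, cf_iota_mul_mono]
  refine ⟨u, hu, ?_, ?_⟩
  · rw [hcfP, Finsupp.single_apply, if_pos rfl, hE (α + β) (le_of_eq (deg_add α β).symm), add_zero]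
  · intro γ hγne hγdeg
    rw [hcfP, Finsupp.single_apply, if_neg (fun h => hγne h.symm),
      hE γ (by rw [← deg_add]; exact hγdeg), add_zero]

/-- `A` is reduced when `R` is `Σ`-rigid. -/
theorem A_reduced (S : SkewPBW R A n) (hrigid : S.SigmaRigid) (hc : S.CCentral)
    (z : A) (hz : z * z = 0) : z = 0 := by
  classical
  by_contra hne
  have hcne : S.cf z ≠ 0 := by
    intro h
    apply hne
    have h2 := S.EQ_cf z
    rw [h, map_zero] at h2
    exact h2.symm
  have hsupp : (S.cf z).support.Nonempty := Finsupp.support_nonempty_iff.mpr hcne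
  obtain ⟨γs, hγmem, hγmax⟩ := exists_rle_max id (S.cf z).support hsupp
  have hcγs : S.cf z γs ≠ 0 := Finsupp.mem_support_iff.mp hγmem
  have hzdecomp : z = ∑ γ ∈ (S.cf z).support, S.ι (S.cf z γ) * S.mono γ := by
    have h := S.decomp z
    rwa [Finsupp.sum] at h
  set T := (S.cf z).support with hTdef
  have hexp : z * z = ∑ p ∈ T ×ˢ T,
      (S.ι (S.cf z p.1) * S.mono p.1) * (S.ι (S.cf z p.2) * S.mono p.2) := by
    conv_lhs => rw [hzdecomp]
    rw [Finset.sum_product]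
    exact Finset.sum_mul_sum _ _ _ _
  have e1 : ∑ p ∈ T ×ˢ T, S.cf
      ((S.ι (S.cf z p.1) * S.mono p.1) * (S.ι (S.cf z p.2) * S.mono p.2)) (γs + γs) = 0 := by
    rw [← Finsupp.finset_sum_apply, ← S.cf_sum, ← hexp, hz, S.cf_zero]
    rfl
  have hdiagmem : (γs, γs) ∈ T ×ˢ T := Finset.mem_product.mpr ⟨hγmem, hγmem⟩
  have hoff : ∀ p ∈ T ×ˢ T, p ≠ (γs, γs) →
      S.cf ((S.ι (S.cf z p.1) * S.mono p.1) * (S.ι (S.cf z p.2) * S.mono p.2)) (γs + γs) = 0 := by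
    intro p hp hpne
    obtain ⟨hp1, hp2⟩ := Finset.mem_product.mp hp
    have hrlt : rlt (p.1 + p.2) (γs + γs) := by
      by_cases h1 : p.1 = γs
      · have h2 : p.2 ≠ γs := by
          intro h2
          exact hpne (Prod.ext h1 h2)
        exact h1 ▸ rlt_add_left γs (rle_of_ne_imp (hγmax p.2 hp2) h2)
      · have hr1 : rlt p.1 γs := rle_of_ne_imp (hγmax p.1 hp1) h1
        exact rlt_rle_trans (rlt_add_right p.2 hr1) (rle_add_left γs (hγmax p.2 hp2))
    obtain ⟨u, hu, hval, hvan⟩ := S.cf_term hc p.1 p.2 (S.cf z p.1) (S.cf z p.2)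
    exact hvan (γs + γs) (Ne.symm (rlt_ne hrlt)) (rle_deg (Or.inl hrlt))
  have e2 := Finset.sum_eq_single (γs, γs) hoff (fun hnp => absurd hdiagmem hnp)
  rw [e2] at e1
  obtain ⟨u, hu, hval, _⟩ := S.cf_term hc γs γs (S.cf z γs) (S.cf z γs)
  rw [hval] at e1
  have huspec : (hu.unit : R) = u := hu.unit_spec
  rw [← huspec] at e1
  have e3 : S.cf z γs * S.sigmaPow γs (S.cf z γs) = 0 :=
    (Units.mul_left_eq_zero hu.unit).mp e1
  exact hcγs (hrigid _ γs e3)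

end SkewPBW
/-- Let `A` be a skew PBW extension of `R` with the constants
`c_{i,j}` of condition (iv) central in `R`.  If `R` is `Σ`-rigid, then `R` is
skew `Π`-Armendariz with respect to `A`. -/
theorem sigmaRigid_skewPiArmendariz {R A : Type*} [Ring R] [Ring A] {n : ℕ}
    (S : SkewPBW R A n) (hc : S.CCentral) (hrigid : S.SigmaRigid) :
    S.SkewPiArmendariz := by
  classical
  intro m t a X b Y hX hY hnil i j
  open SPBWaux SkewPBW in
  have hAred : ∀ z : A, z * z = 0 → z = 0 := fun z hz => S.A_reduced hrigid hc z hz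
  obtain ⟨k, hk⟩ := hnil
  have hfg : (∑ i, S.ι (a i) * S.mono (X i)) * (∑ j, S.ι (b j) * S.mono (Y j)) = 0 :=
    SPBWaux.eq_zero_of_pow_eq_zero hAred k _ hk
  suffices hzero : ∀ (i : Fin (m+1)) (j : Fin (t+1)), a i * b j = 0 by
    exact ⟨1, by rw [pow_one, hzero i j]⟩
  by_contra hcon
  push_neg at hcon
  obtain ⟨i0, j0, hij0⟩ := hcon
  set Q : Finset (Fin (m+1) × Fin (t+1)) :=
    Finset.univ.filter (fun p => a p.1 * b p.2 ≠ 0) with hQdef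
  have hQne : Q.Nonempty := ⟨(i0, j0), by simp [hQdef, hij0]⟩
  obtain ⟨pm, hpm, hpmax⟩ := SPBWaux.exists_rle_max (fun p => X p.1 + Y p.2) Q hQne
  set γs := X pm.1 + Y pm.2 with hγs
  set P : Finset (Fin (m+1) × Fin (t+1)) :=
    Q.filter (fun p => X p.1 + Y p.2 = γs) with hPdef
  have hPne : P.Nonempty := ⟨pm, Finset.mem_filter.mpr ⟨hpm, rfl⟩⟩
  obtain ⟨p₁, hp₁, hp₁min⟩ := SPBWaux.exists_rle_min (fun p => X p.1) P hPne
  have hp₁Q : p₁ ∈ Q := (Finset.mem_filter.mp hp₁).1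
  have hp₁γ : X p₁.1 + Y p₁.2 = γs := (Finset.mem_filter.mp hp₁).2
  have hp₁ne : a p₁.1 * b p₁.2 ≠ 0 := by
    have h := (Finset.mem_filter.mp hp₁Q).2
    exact h
  set w := S.sigmaPow (X p₁.1) (b p₁.2) with hwdef
  have hexp : (∑ i, S.ι (a i) * S.mono (X i)) * (∑ j, S.ι (b j) * S.mono (Y j))
      = ∑ p ∈ Finset.univ ×ˢ Finset.univ,
          (S.ι (a p.1) * S.mono (X p.1)) * (S.ι (b p.2) * S.mono (Y p.2)) := by
    rw [Finset.sum_product]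
    exact Finset.sum_mul_sum _ _ _ _
  have e1 : ∑ p ∈ Finset.univ ×ˢ Finset.univ,
      S.cf ((S.ι (a p.1) * S.mono (X p.1)) * (S.ι (b p.2) * S.mono (Y p.2))) γs = 0 := by
    rw [← Finsupp.finset_sum_apply, ← SkewPBW.cf_sum, ← hexp, hfg, SkewPBW.cf_zero]
    rfl
  have hoff : ∀ p ∈ Finset.univ ×ˢ Finset.univ, p ∉ P →
      S.cf ((S.ι (a p.1) * S.mono (X p.1)) * (S.ι (b p.2) * S.mono (Y p.2))) γs = 0 := by
    intro p _ hpP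
    by_cases hpQ : p ∈ Q
    · have hne : X p.1 + Y p.2 ≠ γs := by
        intro h
        exact hpP (Finset.mem_filter.mpr ⟨hpQ, h⟩)
      have hrlt : SPBWaux.rlt (X p.1 + Y p.2) γs :=
        SPBWaux.rle_of_ne_imp (hpmax p hpQ) hne
      obtain ⟨u, hu, hval, hvan⟩ := S.cf_term hc (X p.1) (Y p.2) (a p.1) (b p.2)
      exact hvan γs (Ne.symm (SPBWaux.rlt_ne hrlt)) (SPBWaux.rle_deg (Or.inl hrlt))
    · have hzero : a p.1 * b p.2 = 0 := by
        by_contra hcc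
        exact hpQ (Finset.mem_filter.mpr ⟨Finset.mem_univ p, hcc⟩)
      rw [S.term_kill hrigid hc hzero, SkewPBW.cf_zero]
      rfl
  have e2 : ∑ p ∈ P,
      S.cf ((S.ι (a p.1) * S.mono (X p.1)) * (S.ι (b p.2) * S.mono (Y p.2))) γs = 0 := by
    rw [← e1]
    exact Finset.sum_subset (fun p _ => Finset.mem_product.mpr
      ⟨Finset.mem_univ _, Finset.mem_univ _⟩) hoff
  have e3 : ∑ p ∈ P,
      S.cf ((S.ι (a p.1) * S.mono (X p.1)) * (S.ι (b p.2) * S.mono (Y p.2))) γs * w = 0 := by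
    rw [← Finset.sum_mul, e2, zero_mul]
  have hterm0 : ∀ p ∈ P, p ≠ p₁ →
      S.cf ((S.ι (a p.1) * S.mono (X p.1)) * (S.ι (b p.2) * S.mono (Y p.2))) γs * w = 0 := by
    intro p hpP hne
    have hpQ : p ∈ Q := (Finset.mem_filter.mp hpP).1
    have hpγ : X p.1 + Y p.2 = γs := (Finset.mem_filter.mp hpP).2
    have hXne : X p.1 ≠ X p₁.1 := by
      intro hXe
      apply hne
      have h1 : p.1 = p₁.1 := hX hXe
      have h2 : Y p.2 = Y p₁.2 := by
        have h3 : X p.1 + Y p.2 = X p.1 + Y p₁.2 := by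
          rw [hpγ, ← hp₁γ, h1]
        exact add_left_cancel h3
      exact Prod.ext h1 (hY h2)
    have hrltX : SPBWaux.rlt (X p₁.1) (X p.1) :=
      SPBWaux.rle_of_ne_imp (hp₁min p hpP) (Ne.symm hXne)
    have hrltsum : SPBWaux.rlt γs (X p.1 + Y p₁.2) := by
      rw [← hp₁γ]
      exact SPBWaux.rlt_add_right (Y p₁.2) hrltX
    have hnotQ : (p.1, p₁.2) ∉ Q := by
      intro hin
      exact SPBWaux.rlt_irrefl γs
        (SPBWaux.rlt_rle_trans hrltsum (hpmax _ hin))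
    have hzero : a p.1 * b p₁.2 = 0 := by
      by_contra hcc
      exact hnotQ (Finset.mem_filter.mpr ⟨Finset.mem_univ _, hcc⟩)
    have haw : a p.1 * w = 0 := by
      rw [hwdef]
      exact (SkewPBW.rigid_sigmaPow hrigid _).mpr hzero
    obtain ⟨u, hu, hval, _⟩ := S.cf_term hc (X p.1) (Y p.2) (a p.1) (b p.2)
    rw [hpγ] at hval
    rw [hval, mul_assoc (a p.1) (S.sigmaPow (X p.1) (b p.2)) u]
    exact SkewPBW.rigid_semi hrigid haw _
  have e5 : S.cf ((S.ι (a p₁.1) * S.mono (X p₁.1)) * (S.ι (b p₁.2) * S.mono (Y p₁.2))) γs * w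
      = 0 := by
    rw [← e3]
    exact (Finset.sum_eq_single p₁ hterm0 (fun h => absurd hp₁ h)).symm
  obtain ⟨u₁, hu₁, hval₁, _⟩ := S.cf_term hc (X p₁.1) (Y p₁.2) (a p₁.1) (b p₁.2)
  rw [hp₁γ] at hval₁
  rw [hval₁, ← hwdef] at e5
  have h6 : w * (a p₁.1 * w) * u₁ = 0 := by
    have h := SkewPBW.rigid_rev hrigid e5
    calc w * (a p₁.1 * w) * u₁ = w * (a p₁.1 * w * u₁) := by
          rw [mul_assoc]
      _ = 0 := h
  have huspec : (hu₁.unit : R) = u₁ := hu₁.unit_spec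
  rw [← huspec] at h6
  have h7 : w * (a p₁.1 * w) = 0 := (Units.mul_left_eq_zero hu₁.unit).mp h6
  have h8 : (a p₁.1 * w) * (a p₁.1 * w) = 0 := by
    calc (a p₁.1 * w) * (a p₁.1 * w) = a p₁.1 * (w * (a p₁.1 * w)) := by
          rw [mul_assoc]
      _ = 0 := by rw [h7, mul_zero]
  have h9 : a p₁.1 * w = 0 := SkewPBW.rigid_sq hrigid h8
  have h10 : a p₁.1 * b p₁.2 = 0 := by
    rw [hwdef] at h9
    exact (SkewPBW.rigid_sigmaPow hrigid _).mp h9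
  exact hp₁ne h10
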